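/- The three sets G₁ = φ(𝒢₁), G₂ = φ(𝒢₂) and G₃ = φ(𝒢₃) are mutually disjoint: G₁ ∩ G₂ = ∅, G₁ ∩ G₃ = ∅ and G₂ ∩ G₃ = ∅. -/
import Mathlib

lemma gk_helper {q a b r s : ℕ} (hq : 0 < q) (hr : r < q) (hs : s < q)
    (h : q * a + r = q * b + s) : a = b ∧ r = s := by
  have h1 : (q * a + r) % q = r := by rw [Nat.mul_add_mod, Nat.mod_eq_of_lt hr]
  have h2 : (q * b + s) % q = s := by rw [Nat.mul_add_mod, Nat.mod_eq_of_lt hs]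
  have hrs : r = s := by rw [← h1, h, h2]
  subst hrs
  exact ⟨Nat.eq_of_mul_eq_mul_left hq (Nat.add_right_cancel h), rfl⟩

lemma gk_core12 (q i k m i' j' k' m' : ℕ) (hq : 2 ≤ q)
    (h1 : i + k + m * q + 2 ≤ q * q)
    (hj1 : 1 ≤ j') (hjm : j' + m' < q) (hk' : k' < q)
    (heq : i * q ^ 3 + k * q + m * (q ^ 2 + 1)
         = i' * q ^ 3 + j' + k' * q + m' * (q ^ 2 + 1)) : False := by
  have hq0 : 0 < q := by omega
  have hm : m < q := by
    have hmq : m * q < q * q := by linarith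
    exact Nat.lt_of_mul_lt_mul_right hmq
  have heq1 : q * (i * q ^ 2 + k + m * q) + m
      = q * (i' * q ^ 2 + k' + m' * q) + (j' + m') := by
    have e1 : q * (i * q ^ 2 + k + m * q) + m = i * q ^ 3 + k * q + m * (q ^ 2 + 1) := by ring
    have e2 : q * (i' * q ^ 2 + k' + m' * q) + (j' + m')
        = i' * q ^ 3 + j' + k' * q + m' * (q ^ 2 + 1) := by ring
    rw [e1, e2]; exact heq
  obtain ⟨hA, hmJ⟩ := gk_helper hq0 hm hjm heq1
  have hk : q * (k / q) + k % q = k := Nat.div_add_mod k q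
  set c := k / q with hcdef
  have hrq : k % q < q := Nat.mod_lt _ hq0
  have heq2 : q * (i * q + c + m) + k % q = q * (i' * q + m') + k' := by
    have e1 : q * (i * q + c + m) + k % q = i * q ^ 2 + (q * c + k % q) + m * q := by ring
    have e2 : q * (i' * q + m') + k' = i' * q ^ 2 + k' + m' * q := by ring
    rw [e1, e2, hk]; exact hA
  obtain ⟨hB, hrk⟩ := gk_helper hq0 hrq hk' heq2
  have hii : i < i' := by
    by_contra hcon
    push_neg at hcon
    have hmul : i' * q ≤ i * q := Nat.mul_le_mul_right q hcon
    linarith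
  have h5 : i * q + q ≤ i' * q := by
    have h5a : (i + 1) * q ≤ i' * q := Nat.mul_le_mul_right q hii
    have h5b : (i + 1) * q = i * q + q := by ring
    linarith
  have hcj : q ≤ c + j' := by linarith
  have h6 : q * q ≤ q * (c + j') := Nat.mul_le_mul_left q hcj
  have h7 : q * (c + j') = q * c + j' * q := by ring
  have h8 : m * q = j' * q + m' * q := by rw [hmJ]; ring
  nlinarith

lemma gk_core13 (q i k m i' j' k' S : ℕ) (hq : 2 ≤ q)
    (h1 : i + k + m * q + 2 ≤ q * q)
    (h3l : q * q ≤ i' + k' + S * q + 1)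
    (hk' : k' < q) (hj' : j' < q) (hS : S < q)
    (heq : i * q ^ 3 + k * q + m * (q ^ 2 + 1)
         = i' * q ^ 3 + j' + k' * q + S * q ^ 2) : False := by
  have hq0 : 0 < q := by omega
  have hm : m < q := by
    have hmq : m * q < q * q := by linarith
    exact Nat.lt_of_mul_lt_mul_right hmq
  have heq1 : q * (i * q ^ 2 + k + m * q) + m
      = q * (i' * q ^ 2 + k' + S * q) + j' := by
    have e1 : q * (i * q ^ 2 + k + m * q) + m = i * q ^ 3 + k * q + m * (q ^ 2 + 1) := by ring
    have e2 : q * (i' * q ^ 2 + k' + S * q) + j'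
        = i' * q ^ 3 + j' + k' * q + S * q ^ 2 := by ring
    rw [e1, e2]; exact heq
  obtain ⟨hA, hmj⟩ := gk_helper hq0 hm hj' heq1
  have hk : q * (k / q) + k % q = k := Nat.div_add_mod k q
  set c := k / q with hcdef
  have hrq : k % q < q := Nat.mod_lt _ hq0
  have heq2 : q * (i * q + c + m) + k % q = q * (i' * q + S) + k' := by
    have e1 : q * (i * q + c + m) + k % q = i * q ^ 2 + (q * c + k % q) + m * q := by ring
    have e2 : q * (i' * q + S) + k' = i' * q ^ 2 + k' + S * q := by ring
    rw [e1, e2, hk]; exact hA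
  obtain ⟨hB, hrk⟩ := gk_helper hq0 hrq hk' heq2
  rcases Nat.lt_trichotomy i i' with h | h | h
  · have h5 : i * q + q ≤ i' * q := by
      have h5a : (i + 1) * q ≤ i' * q := Nat.mul_le_mul_right q h
      have h5b : (i + 1) * q = i * q + q := by ring
      linarith
    have hcm : q + S ≤ c + m := by linarith
    have h6 : q * (q + S) ≤ q * (c + m) := Nat.mul_le_mul_left q hcm
    have h7 : q * (c + m) = q * c + m * q := by ring
    have h8 : q * (q + S) = q * q + S * q := by ring
    nlinarith
  · subst h
    have hcm : c + m = S := by linarith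
    have h6 : S * q = q * c + m * q := by rw [← hcm]; ring
    linarith
  · have h5 : i' * q + q ≤ i * q := by
      have h5a : (i' + 1) * q ≤ i * q := Nat.mul_le_mul_right q h
      have h5b : (i' + 1) * q = i' * q + q := by ring
      linarith
    linarith

lemma gk_core23 (q i j k m i' j' k' S : ℕ) (hq : 2 ≤ q)
    (h2w : i + j + k + m * q + 2 ≤ q * q)
    (h3l : q * q ≤ i' + k' + S * q + 1)
    (hj1 : 1 ≤ j) (hjm : j + m < q) (hk : k < q) (hk' : k' < q) (hj' : j' < q) (hS : S < q)
    (heq : i * q ^ 3 + j + k * q + m * (q ^ 2 + 1)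
         = i' * q ^ 3 + j' + k' * q + S * q ^ 2) : False := by
  have hq0 : 0 < q := by omega
  have hm : m < q := by omega
  have heq1 : q * (i * q ^ 2 + k + m * q) + (j + m)
      = q * (i' * q ^ 2 + k' + S * q) + j' := by
    have e1 : q * (i * q ^ 2 + k + m * q) + (j + m)
        = i * q ^ 3 + j + k * q + m * (q ^ 2 + 1) := by ring
    have e2 : q * (i' * q ^ 2 + k' + S * q) + j'
        = i' * q ^ 3 + j' + k' * q + S * q ^ 2 := by ring
    rw [e1, e2]; exact heq
  obtain ⟨hA, hjj⟩ := gk_helper hq0 hjm hj' heq1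
  have heq2 : q * (i * q + m) + k = q * (i' * q + S) + k' := by
    have e1 : q * (i * q + m) + k = i * q ^ 2 + k + m * q := by ring
    have e2 : q * (i' * q + S) + k' = i' * q ^ 2 + k' + S * q := by ring
    rw [e1, e2]; exact hA
  obtain ⟨hB, hkk⟩ := gk_helper hq0 hk hk' heq2
  have heq3 : q * i + m = q * i' + S := by
    have e1 : q * i = i * q := by ring
    have e2 : q * i' = i' * q := by ring
    rw [e1, e2]; exact hB
  obtain ⟨hii, hmS⟩ := gk_helper hq0 hm hS heq3
  have h6 : S * q = m * q := by rw [hmS]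
  linarith



/-- Tuples `(i, j, k, m, n₁, …, n_{q-2})` of nonnegative integers; the coordinate
`n : Fin (q-2) → ℕ` encodes `n_s` via `n_s = n ⟨s-1, _⟩`, i.e. index `t : Fin (q-2)`
corresponds to the paper's index `s = t + 1`. -/
abbrev GKTup (q : ℕ) := ℕ × ℕ × ℕ × ℕ × (Fin (q - 2) → ℕ)

/-- `φ(i,j,k,m,n₁,…,n_{q-2}) = i q^3 + j + k q + m (q^2+1) + Σ_{s=1}^{q-2} n_s (s+1) q^2 + 1`. -/
def gkPhi (q : ℕ) (t : GKTup q) : ℕ :=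
  t.1 * q ^ 3 + t.2.1 + t.2.2.1 * q + t.2.2.2.1 * (q ^ 2 + 1) +
    (∑ s : Fin (q - 2), t.2.2.2.2 s * ((s.1 + 2) * q ^ 2)) + 1

/-- The weight `i + j + k + m q + Σ_{s=1}^{q-2} n_s ((s+1) q - s)`. -/
def gkWt (q : ℕ) (t : GKTup q) : ℕ :=
  t.1 + t.2.1 + t.2.2.1 + t.2.2.2.1 * q +
    ∑ s : Fin (q - 2), t.2.2.2.2 s * ((s.1 + 2) * q - (s.1 + 1))

/-- The set `𝒢` of tuples with `j ≤ q - 1` and weight at most `q^2 - 2`. -/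
def gkCalG (q : ℕ) : Set (GKTup q) :=
  {t | t.2.1 ≤ q - 1 ∧ gkWt q t ≤ q ^ 2 - 2}

/-- The set of gaps `G = φ(𝒢)`. -/
def gkG (q : ℕ) : Set ℕ := gkPhi q '' gkCalG q

/-- `𝒢₁`: tuples in `𝒢` with `j = 0` and all `n_s = 0`. -/
def gkCalG1 (q : ℕ) : Set (GKTup q) :=
  {t | t ∈ gkCalG q ∧ t.2.1 = 0 ∧ ∀ s, t.2.2.2.2 s = 0}

/-- `𝒢₂`: tuples in `𝒢` with `1 ≤ j ≤ q - 1`, `k ≤ q - 1`, `j + m ≤ q - 1` and all `n_s = 0`. -/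
def gkCalG2 (q : ℕ) : Set (GKTup q) :=
  {t | t ∈ gkCalG q ∧ 1 ≤ t.2.1 ∧ t.2.1 ≤ q - 1 ∧ t.2.2.1 ≤ q - 1 ∧
    t.2.1 + t.2.2.2.1 ≤ q - 1 ∧ ∀ s, t.2.2.2.2 s = 0}

/-- `𝒢₃`: tuples in `𝒢` with `m = 0`, `k ≤ q - 1`, exactly one `n_s = 1` (the other `n`'s
being zero) and `i + k + (s+1) q ≥ q^2 - 1`. -/
def gkCalG3 (q : ℕ) : Set (GKTup q) :=
  {t | t ∈ gkCalG q ∧ t.2.2.2.1 = 0 ∧ t.2.2.1 ≤ q - 1 ∧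
    ∃ s : Fin (q - 2), t.2.2.2.2 s = 1 ∧ (∀ s', s' ≠ s → t.2.2.2.2 s' = 0) ∧
      q ^ 2 - 1 ≤ t.1 + t.2.2.1 + (s.1 + 2) * q}


lemma gkPhi_nzero (q : ℕ) (t : GKTup q) (hn : ∀ s, t.2.2.2.2 s = 0) :
    gkPhi q t = t.1 * q ^ 3 + t.2.1 + t.2.2.1 * q + t.2.2.2.1 * (q ^ 2 + 1) + 1 := by
  unfold gkPhi
  rw [Finset.sum_eq_zero fun s _ => by rw [hn s, zero_mul]]; ring

lemma gkWt_nzero (q : ℕ) (t : GKTup q) (hn : ∀ s, t.2.2.2.2 s = 0) :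
    gkWt q t = t.1 + t.2.1 + t.2.2.1 + t.2.2.2.1 * q := by
  unfold gkWt
  rw [Finset.sum_eq_zero fun s _ => by rw [hn s, zero_mul]]; ring

lemma gkPhi_single (q : ℕ) (t : GKTup q) (s : Fin (q - 2)) (h1 : t.2.2.2.2 s = 1)
    (h0 : ∀ s', s' ≠ s → t.2.2.2.2 s' = 0) :
    gkPhi q t = t.1 * q ^ 3 + t.2.1 + t.2.2.1 * q + t.2.2.2.1 * (q ^ 2 + 1) +
      (s.1 + 2) * q ^ 2 + 1 := by
  unfold gkPhi
  rw [Finset.sum_eq_single_of_mem s (Finset.mem_univ s)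
    (fun b _ hb => by rw [h0 b hb, zero_mul]), h1, one_mul]

set_option maxHeartbeats 1000000 in
/-- The sets `G₁ = φ(𝒢₁)`, `G₂ = φ(𝒢₂)` and `G₃ = φ(𝒢₃)` are mutually disjoint. -/
theorem gk_G1_G2_G3_disjoint (q : ℕ) (hq : IsPrimePow q) :
    (gkPhi q '' gkCalG1 q) ∩ (gkPhi q '' gkCalG2 q) = ∅ ∧
    (gkPhi q '' gkCalG1 q) ∩ (gkPhi q '' gkCalG3 q) = ∅ ∧
    (gkPhi q '' gkCalG2 q) ∩ (gkPhi q '' gkCalG3 q) = ∅ := by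
  have hq2 : 2 ≤ q := hq.two_le
  have hqq : 2 ≤ q ^ 2 := le_trans hq2 (Nat.le_self_pow two_ne_zero q)
  refine ⟨?_, ?_, ?_⟩
  · rw [Set.eq_empty_iff_forall_notMem]
    rintro x ⟨⟨t, ⟨⟨htj, htw⟩, htj0, htn⟩, rfl⟩,
      ⟨u, ⟨⟨huj, huw⟩, hu1, hule, hukle, hujm, hun⟩, hphi⟩⟩
    rw [gkWt_nzero q t htn, htj0] at htw
    rw [gkPhi_nzero q t htn, gkPhi_nzero q u hun, htj0] at hphi
    have htw2 : t.1 + t.2.2.1 + t.2.2.2.1 * q + 2 ≤ q * q := by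
      have h := (Nat.le_sub_iff_add_le hqq).mp htw
      rw [pow_two] at h; linarith
    refine gk_core12 q t.1 t.2.2.1 t.2.2.2.1 u.1 u.2.1 u.2.2.1 u.2.2.2.1 hq2 htw2 hu1
      (by omega) (by omega) ?_
    linarith [hphi]
  · rw [Set.eq_empty_iff_forall_notMem]
    rintro x ⟨⟨t, ⟨⟨htj, htw⟩, htj0, htn⟩, rfl⟩,
      ⟨u, ⟨⟨huj, huw⟩, hum0, hukle, s, hs1, hs0, hsl⟩, hphi⟩⟩
    rw [gkWt_nzero q t htn, htj0] at htw
    rw [gkPhi_nzero q t htn, gkPhi_single q u s hs1 hs0, htj0, hum0, zero_mul] at hphi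
    have htw2 : t.1 + t.2.2.1 + t.2.2.2.1 * q + 2 ≤ q * q := by
      have h := (Nat.le_sub_iff_add_le hqq).mp htw
      rw [pow_two] at h; linarith
    have h3l : q * q ≤ u.1 + u.2.2.1 + (s.1 + 2) * q + 1 := by
      have h := Nat.sub_le_iff_le_add.mp hsl
      rw [pow_two] at h; linarith
    have hS : s.1 + 2 < q := by have := s.isLt; omega
    refine gk_core13 q t.1 t.2.2.1 t.2.2.2.1 u.1 u.2.1 u.2.2.1 (s.1 + 2) hq2 htw2 h3l
      (by omega) (by omega) hS ?_
    linarith [hphi]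
  · rw [Set.eq_empty_iff_forall_notMem]
    rintro x ⟨⟨t, ⟨⟨htj, htw⟩, ht1, htle, htkle, htjm, htn⟩, rfl⟩,
      ⟨u, ⟨⟨huj, huw⟩, hum0, hukle, s, hs1, hs0, hsl⟩, hphi⟩⟩
    rw [gkWt_nzero q t htn] at htw
    rw [gkPhi_nzero q t htn, gkPhi_single q u s hs1 hs0, hum0, zero_mul] at hphi
    have htw2 : t.1 + t.2.1 + t.2.2.1 + t.2.2.2.1 * q + 2 ≤ q * q := by
      have h := (Nat.le_sub_iff_add_le hqq).mp htw
      rw [pow_two] at h; linarith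
    have h3l : q * q ≤ u.1 + u.2.2.1 + (s.1 + 2) * q + 1 := by
      have h := Nat.sub_le_iff_le_add.mp hsl
      rw [pow_two] at h; linarith
    have hS : s.1 + 2 < q := by have := s.isLt; omega
    refine gk_core23 q t.1 t.2.1 t.2.2.1 t.2.2.2.1 u.1 u.2.1 u.2.2.1 (s.1 + 2) hq2 htw2 h3l
      ht1 (by omega) (by omega) (by omega) (by omega) hS ?_
    linarith [hphi]
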